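/- Let H be a finite connected bipartite mixed graph with bipartition {X,Y} (every arc of H has its tail in one of X,Y and its head in the other). Then the number of isomorphism classes of finite mixed graphs G whose canonical double cover CDC(G) is isomorphic to H is equal to the number of conjugacy classes, under conjugation by the automorphism group Aut(H), of involutions θ ∈ Aut(H) which interchange the two colour classes, i.e. θ(X) = Y. -/

import Mathlib

/-- The canonical double cover of a mixed graph `G = (V, A)`: the mixed graph on
`V × Bool` with an arc from `(u, i)` to `(v, j)` iff `i ≠ j` and `(u, v) ∈ A`. -/
def MixedCDC {V : Type*} (A : V → V → Prop) : (V × Bool) → (V × Bool) → Prop :=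
  fun p q => p.2 ≠ q.2 ∧ A p.1 q.1

/-- The underlying simple graph of a mixed graph. -/
def UnderGraph {V : Type*} (A : V → V → Prop) : SimpleGraph V where
  Adj u v := u ≠ v ∧ (A u v ∨ A v u)
  symm := ⟨by intro u v h; exact ⟨h.1.symm, h.2.symm⟩⟩
  loopless := ⟨fun v h => h.1 rfl⟩

namespace Stmt3Aux

def sw (V : Type*) : Equiv.Perm (V × Bool) :=
  ⟨fun p => (p.1, !p.2), fun p => (p.1, !p.2), fun p => by simp, fun p => by simp⟩

@[simp] lemma sw_apply {V : Type*} (p : V × Bool) : sw V p = (p.1, !p.2) := rfl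

lemma cdc_sw {V : Type*} (A : V → V → Prop) (p q : V × Bool) :
    MixedCDC A (sw V p) (sw V q) ↔ MixedCDC A p q := by
  simp [MixedCDC]

def thetaOf {W : Type*} {V : Type*} (e : (V × Bool) ≃ W) : Equiv.Perm W :=
  (e.symm.trans (sw V)).trans e

lemma thetaOf_apply {W V : Type*} (e : (V × Bool) ≃ W) (w : W) :
    thetaOf e w = e (sw V (e.symm w)) := rfl

lemma transfer {V : Type*} {A₁ A₂ : V → V → Prop} (h : Equiv.Perm (V × Bool))
    (hcomm : ∀ p, h (sw V p) = sw V (h p))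
    (htr : ∀ p q, MixedCDC A₁ p q ↔ MixedCDC A₂ (h p) (h q)) :
    ∃ f : V ≃ V, ∀ u v, A₁ u v ↔ A₂ (f u) (f v) := by
  have hswt : ∀ u : V, h (u, true) = ((h (u, false)).1, !(h (u, false)).2) := by
    intro u
    have := hcomm (u, false)
    simpa using this
  have key : ∀ (u : V) (b : Bool), (h (u, b)).1 = (h (u, false)).1 := by
    intro u b
    cases b
    · rfl
    · rw [hswt]
  set f0 : V → V := fun u => (h (u, false)).1 with hf0
  have hinj : Function.Injective f0 := by
    intro u u' heq
    by_cases hb : (h (u, false)).2 = (h (u', false)).2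
    · have : h (u, false) = h (u', false) := Prod.ext heq hb
      simpa [Prod.ext_iff] using h.injective this
    · have hb2 : (h (u', false)).2 = !(h (u, false)).2 := by
        cases h1 : (h (u, false)).2 <;> cases h2 : (h (u', false)).2 <;> simp_all
      have : h (u', false) = h (u, true) := by
        rw [hswt]
        exact Prod.ext heq.symm hb2
      have := h.injective this
      simp [Prod.ext_iff] at this
  have hsurj : Function.Surjective f0 := by
    intro v
    refine ⟨(h.symm (v, false)).1, ?_⟩
    have := key (h.symm (v, false)).1 (h.symm (v, false)).2
    simp only [hf0]
    rw [← this, Prod.mk.eta, h.apply_symm_apply]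
  refine ⟨Equiv.ofBijective f0 ⟨hinj, hsurj⟩, fun u v => ?_⟩
  have hA₁ : A₁ u v ↔ MixedCDC A₁ (u, false) (v, true) := by
    simp [MixedCDC]
  constructor
  · intro hA
    have := (htr (u, false) (v, true)).mp (hA₁.mp hA)
    have h2 := this.2
    rw [key v true] at h2
    exact h2
  · intro hA
    by_cases hb : (h (u, false)).2 = (h (v, false)).2
    · have : MixedCDC A₂ (h (u, false)) (h (v, true)) := by
        refine ⟨?_, ?_⟩
        · rw [hswt]; simp [hb]
        · rw [key v true]; exact hA
      exact (hA₁.symm.mp <| (htr (u, false) (v, true)).mpr this)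
    · have : MixedCDC A₂ (h (u, false)) (h (v, false)) := ⟨hb, hA⟩
      have := (htr (u, false) (v, false)).mpr this
      exact this.2

lemma same_or_flip {W : Type*} {G : SimpleGraph W} (c d : W → Bool)
    (hc : ∀ u v, G.Adj u v → c u ≠ c v) (hd : ∀ u v, G.Adj u v → d u ≠ d v)
    {u v : W} (h : G.Reachable u v) : (c u = d u) ↔ (c v = d v) := by
  suffices H : ∀ {a b : W} (p : G.Walk a b), (c a = d a) ↔ (c b = d b) from
    h.elim (fun p => H p)
  intro a b p
  induction p with
  | nil => rfl
  | cons hadj p ih =>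
    refine Iff.trans ?_ ih
    rename_i x y z
    have h1 := hc _ _ hadj
    have h2 := hd _ _ hadj
    cases hca : c x <;> cases hcb : c y <;> cases hda : d x <;> cases hdb : d y <;> simp_all

lemma sw_sw {V : Type*} (p : V × Bool) : sw V (sw V p) = p := by simp

lemma M1 {W V : Type*} (B : W → W → Prop) {A₁ A₂ : V → V → Prop}
    (e₁ e₂ : (V × Bool) ≃ W)
    (he₁ : ∀ p q, MixedCDC A₁ p q ↔ B (e₁ p) (e₁ q))
    (he₂ : ∀ p q, MixedCDC A₂ p q ↔ B (e₂ p) (e₂ q))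
    (f : V ≃ V) (hf : ∀ u v, A₁ u v ↔ A₂ (f u) (f v)) :
    ∃ g : Equiv.Perm W, (∀ u v, B u v ↔ B (g u) (g v)) ∧
      thetaOf e₂ = g * thetaOf e₁ * g⁻¹ := by
  set F : Equiv.Perm (V × Bool) := f.prodCongr (Equiv.refl Bool) with hFdef
  have hF : ∀ p : V × Bool, F p = (f p.1, p.2) := fun p => rfl
  have hFs : ∀ p : V × Bool, F.symm p = (f.symm p.1, p.2) := fun p => rfl
  have hcdcF : ∀ p q, MixedCDC A₁ p q ↔ MixedCDC A₂ (F p) (F q) := by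
    intro p q
    simp only [MixedCDC, hF]
    exact and_congr Iff.rfl (hf _ _)
  refine ⟨(e₁.symm.trans F).trans e₂, ?_, ?_⟩
  · intro u v
    have h1 : B u v ↔ MixedCDC A₁ (e₁.symm u) (e₁.symm v) := by
      rw [he₁]; simp
    rw [h1, hcdcF, he₂]
    rfl
  · apply Equiv.ext
    intro w
    simp only [Equiv.Perm.mul_apply]
    have hgs : ((e₁.symm.trans F).trans e₂)⁻¹ w = e₁ (F.symm (e₂.symm w)) := rfl
    rw [hgs]
    show e₂ (sw V (e₂.symm w)) =
      e₂ (F (e₁.symm (e₁ (sw V (e₁.symm (e₁ (F.symm (e₂.symm w))))))))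
    rw [Equiv.symm_apply_apply, Equiv.symm_apply_apply]
    congr 1
    rw [hFs, hF]
    simp

lemma M2 {W V : Type*} (B : W → W → Prop) {A₁ A₂ : V → V → Prop}
    (e₁ e₂ : (V × Bool) ≃ W)
    (he₁ : ∀ p q, MixedCDC A₁ p q ↔ B (e₁ p) (e₁ q))
    (he₂ : ∀ p q, MixedCDC A₂ p q ↔ B (e₂ p) (e₂ q))
    (g : Equiv.Perm W) (hg : ∀ u v, B u v ↔ B (g u) (g v))
    (hconj : thetaOf e₂ = g * thetaOf e₁ * g⁻¹) :
    ∃ f : V ≃ V, ∀ u v, A₁ u v ↔ A₂ (f u) (f v) := by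
  set h : Equiv.Perm (V × Bool) := (e₁.trans (g : W ≃ W)).trans e₂.symm with hhdef
  have hh : ∀ p, h p = e₂.symm (g (e₁ p)) := fun p => rfl
  have hcomm : ∀ p, h (sw V p) = sw V (h p) := by
    intro p
    have h1 : thetaOf e₂ (g (e₁ p)) = g (thetaOf e₁ (g⁻¹ (g (e₁ p)))) := by
      rw [hconj]; rfl
    rw [Equiv.Perm.coe_inv, Equiv.symm_apply_apply] at h1
    have h2 : thetaOf e₁ (e₁ p) = e₁ (sw V p) := by
      rw [thetaOf_apply, Equiv.symm_apply_apply]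
    rw [h2, thetaOf_apply] at h1
    rw [hh, hh, ← h1, Equiv.symm_apply_apply]
  have htr : ∀ p q, MixedCDC A₁ p q ↔ MixedCDC A₂ (h p) (h q) := by
    intro p q
    rw [he₁, hg, he₂]
    rw [hh, hh, Equiv.apply_symm_apply, Equiv.apply_symm_apply]
  exact transfer h hcomm htr

lemma mk_theta {W : Type*} (B : W → W → Prop) (X Y : Set W)
    (hpart_union : X ∪ Y = Set.univ) (hpart_disj : X ∩ Y = ∅)
    (harcs : ∀ u v, B u v → (u ∈ X ∧ v ∈ Y) ∨ (u ∈ Y ∧ v ∈ X))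
    (hconn : (UnderGraph B).Connected)
    (A : ↥X → ↥X → Prop) (e : (↥X × Bool) ≃ W)
    (he : ∀ p q, MixedCDC A p q ↔ B (e p) (e q)) :
    (∀ u v, B u v ↔ B (thetaOf e u) (thetaOf e v)) ∧
      thetaOf e * thetaOf e = 1 ∧ thetaOf e ≠ 1 ∧
      (fun w => thetaOf e w) '' X = Y := by
  classical
  have hnot : ∀ w, w ∈ X → w ∈ Y → False := by
    intro w h1 h2
    have : w ∈ X ∩ Y := ⟨h1, h2⟩
    rw [hpart_disj] at this
    exact this
  have h1 : ∀ w₁ w₂, B w₁ w₂ ↔ MixedCDC A (e.symm w₁) (e.symm w₂) := by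
    intro w₁ w₂; rw [he]; simp
  have hauto : ∀ u v, B u v ↔ B (thetaOf e u) (thetaOf e v) := by
    intro u v
    rw [h1, ← cdc_sw, he]
    rfl
  have hinv : ∀ w, thetaOf e (thetaOf e w) = w := by
    intro w
    rw [thetaOf_apply, thetaOf_apply, Equiv.symm_apply_apply, sw_sw,
      Equiv.apply_symm_apply]
  have hsq : thetaOf e * thetaOf e = 1 := by
    apply Equiv.ext
    intro w
    rw [Equiv.Perm.mul_apply, hinv]
    rfl
  have hWne : Nonempty W := hconn.nonempty
  have hne : thetaOf e ≠ 1 := by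
    intro hcontra
    obtain ⟨w⟩ := hWne
    set p := e.symm w with hp
    have h2 : thetaOf e (e p) = e (sw ↥X p) := by
      rw [thetaOf_apply, Equiv.symm_apply_apply]
    rw [hcontra] at h2
    have h3 : p = sw ↥X p := e.injective h2
    have h4 := congrArg Prod.snd h3
    simp at h4
  refine ⟨hauto, hsq, hne, ?_⟩
  -- colouring argument
  set c : W → Bool := fun w => (e.symm w).2 with hcdef
  set d : W → Bool := fun w => decide (w ∈ X) with hddef
  have hc : ∀ u v, (UnderGraph B).Adj u v → c u ≠ c v := by
    intro u v hadj
    rcases hadj.2 with hB | hB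
    · exact ((h1 u v).mp hB).1
    · exact (((h1 v u).mp hB).1).symm  -- c v ≠ c u gives?
  have hd : ∀ u v, (UnderGraph B).Adj u v → d u ≠ d v := by
    intro u v hadj
    rcases hadj.2 with hB | hB
    · rcases harcs _ _ hB with ⟨hu, hv⟩ | ⟨hu, hv⟩
      · have : v ∉ X := fun hvx => hnot v hvx hv
        simp [hddef, hu, this]
      · have : u ∉ X := fun hux => hnot u hux hu
        simp [hddef, hv, this]
    · rcases harcs _ _ hB with ⟨hv, hu⟩ | ⟨hv, hu⟩
      · have : u ∉ X := fun hux => hnot u hux hu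
        simp [hddef, hv, this]
      · have : v ∉ X := fun hvx => hnot v hvx hv
        simp [hddef, hu, this]
  have hcθ : ∀ w, c (thetaOf e w) = !(c w) := by
    intro w
    simp [hcdef, thetaOf_apply]
  obtain ⟨w₀⟩ := hWne
  have hflip : ∀ w, d (thetaOf e w) = !(d w) := by
    by_cases h0 : c w₀ = d w₀
    · have hall : ∀ w, c w = d w := fun w =>
        (same_or_flip c d hc hd (hconn.preconnected w₀ w)).mp h0
      intro w
      rw [← hall, ← hall, hcθ]
    · have hall : ∀ w, d w = !(c w) := by
        intro w
        have h2 : ¬(c w = d w) := fun hw =>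
          h0 ((same_or_flip c d hc hd (hconn.preconnected w₀ w)).mpr hw)
        cases hcw : c w <;> cases hdw : d w
        · exact absurd (hcw.trans hdw.symm) h2
        · rfl
        · rfl
        · exact absurd (hcw.trans hdw.symm) h2
      intro w
      rw [hall, hall, hcθ]
  have hmemX : ∀ w, w ∈ X ↔ d w = true := by
    intro w; simp [hddef]
  ext y
  simp only [Set.mem_image]
  constructor
  · rintro ⟨x, hx, rfl⟩
    have hdx : d (thetaOf e x) = false := by
      rw [hflip, (hmemX x).mp hx]; rfl
    have hnx : thetaOf e x ∉ X := by
      rw [hmemX, hdx]; simp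
    have : thetaOf e x ∈ X ∪ Y := by rw [hpart_union]; trivial
    rcases this with h | h
    · exact absurd h hnx
    · exact h
  · intro hy
    have hny : y ∉ X := fun hyx => hnot y hyx hy
    have hdy : d y = false := by
      cases hdw : d y
      · rfl
      · exact absurd ((hmemX y).mpr hdw) hny
    have : d (thetaOf e y) = true := by rw [hflip, hdy]; rfl
    exact ⟨thetaOf e y, (hmemX _).mpr this, hinv y⟩

lemma mk_A {W : Type*} (B : W → W → Prop) (X Y : Set W)
    (hpart_union : X ∪ Y = Set.univ) (hpart_disj : X ∩ Y = ∅)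
    (harcs : ∀ u v, B u v → (u ∈ X ∧ v ∈ Y) ∨ (u ∈ Y ∧ v ∈ X))
    (θ : Equiv.Perm W)
    (hθ : (∀ u v, B u v ↔ B (θ u) (θ v)) ∧ θ * θ = 1 ∧ θ ≠ 1 ∧
      (fun w => θ w) '' X = Y) :
    ∃ e : (↥X × Bool) ≃ W,
      (∀ p q, MixedCDC (fun u v : ↥X => B ↑u (θ ↑v)) p q ↔ B (e p) (e q)) ∧
      thetaOf e = θ := by
  obtain ⟨hauto, hsq, -, himg⟩ := hθ
  have hnot : ∀ w, w ∈ X → w ∈ Y → False := by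
    intro w h1 h2
    have : w ∈ X ∩ Y := ⟨h1, h2⟩
    rw [hpart_disj] at this
    exact this
  have hinv : ∀ w, θ (θ w) = w := by
    intro w
    have := DFunLike.congr_fun hsq w
    simpa using this
  have hXY : ∀ w, w ∈ X → θ w ∈ Y := by
    intro w hw
    rw [← himg]
    exact ⟨w, hw, rfl⟩
  have hYX : ∀ w, w ∈ Y → θ w ∈ X := by
    intro w hw
    rw [← himg] at hw
    obtain ⟨x, hx, rfl⟩ := hw
    rw [hinv]
    exact hx
  set f0 : ↥X × Bool → W := fun p => cond p.2 (θ ↑p.1) ↑p.1 with hf0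
  have hinj : Function.Injective f0 := by
    rintro ⟨u, b⟩ ⟨u', b'⟩ heq
    cases b <;> cases b'
    · simp only [hf0, cond] at heq
      exact Prod.ext (Subtype.ext heq) rfl
    · simp only [hf0, cond] at heq
      exact absurd (hXY _ u'.2) (fun h => hnot _ (heq ▸ u.2) (heq ▸ h))
    · simp only [hf0, cond] at heq
      exact absurd (hXY _ u.2) (fun h => hnot _ (heq ▸ u'.2) (heq ▸ h))
    · simp only [hf0, cond] at heq
      exact Prod.ext (Subtype.ext (θ.injective heq)) rfl
  have hsurj : Function.Surjective f0 := by
    intro w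
    have hw : w ∈ X ∪ Y := by rw [hpart_union]; trivial
    rcases hw with hw | hw
    · exact ⟨(⟨w, hw⟩, false), rfl⟩
    · rw [← himg] at hw
      obtain ⟨x, hx, hxe⟩ := hw
      exact ⟨(⟨x, hx⟩, true), hxe⟩
  set e : (↥X × Bool) ≃ W := Equiv.ofBijective f0 ⟨hinj, hsurj⟩ with hedef
  have heapp : ∀ p, e p = f0 p := fun p => rfl
  have hswap : ∀ p, e (sw ↥X p) = θ (e p) := by
    rintro ⟨u, b⟩
    cases b
    · rfl
    · show f0 (u, false) = θ (f0 (u, true))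
      simp only [hf0, cond]
      rw [hinv]
  refine ⟨e, ?_, ?_⟩
  · rintro ⟨u, b⟩ ⟨v, c⟩
    cases b <;> cases c
    · simp only [MixedCDC, ne_eq, not_true_eq_false, false_and, heapp, hf0, cond]
      constructor
      · intro h; exact h.elim
      · intro hB
        rcases harcs _ _ hB with ⟨h1, h2⟩ | ⟨h1, h2⟩
        · exact hnot _ v.2 h2
        · exact hnot _ u.2 h1
    · simp only [MixedCDC, heapp, hf0, cond]
      simp
    · show (MixedCDC _ _ _) ↔ B (f0 (u, true)) (f0 (v, false))
      simp only [MixedCDC, hf0, cond]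
      have hiff : B (↑u) (θ ↑v) ↔ B (θ ↑u) ↑v := by
        constructor
        · intro h; have := (hauto _ _).mp h; rwa [hinv] at this
        · intro h; have := (hauto _ _).mp h; rwa [hinv] at this
      exact ⟨fun h => hiff.mp h.2, fun h => ⟨by simp, hiff.mpr h⟩⟩
    · simp only [MixedCDC, ne_eq, not_true_eq_false, false_and, heapp, hf0, cond]
      constructor
      · intro h; exact h.elim
      · intro hB
        rcases harcs _ _ hB with ⟨h1, h2⟩ | ⟨h1, h2⟩
        · exact hnot _ h1 (hXY _ u.2)
        · exact hnot _ h2 (hXY _ v.2)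
  · apply Equiv.ext
    intro w
    rw [thetaOf_apply, hswap, Equiv.apply_symm_apply]

end Stmt3Aux

/-- for a finite connected bipartite mixed graph `H = (W, B)` with
bipartition `{X, Y}`, the number of isomorphism classes of finite mixed graphs `G`
with `CDC(G) ≅ H` (counted as isomorphism classes of mixed graphs on the vertex set
`X`, which has the forced cardinality) equals the number of `Aut(H)`-conjugacy
classes of involutions of `H` interchanging the two colour classes. -/
theorem stmt_3 {W : Type*} [Fintype W] (B : W → W → Prop) (X Y : Set W)
    (hpart_union : X ∪ Y = Set.univ) (hpart_disj : X ∩ Y = ∅)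
    (harcs : ∀ u v, B u v → (u ∈ X ∧ v ∈ Y) ∨ (u ∈ Y ∧ v ∈ X))
    (hconn : (UnderGraph B).Connected) :
    Nat.card (Quot (fun (G₁ G₂ : {A : ↥X → ↥X → Prop //
          ∃ e : (↥X × Bool) ≃ W, ∀ p q, MixedCDC A p q ↔ B (e p) (e q)}) =>
        ∃ f : ↥X ≃ ↥X, ∀ u v, G₁.val u v ↔ G₂.val (f u) (f v))) =
    Nat.card (Quot (fun (θ₁ θ₂ : {θ : Equiv.Perm W //
          (∀ u v, B u v ↔ B (θ u) (θ v)) ∧ θ * θ = 1 ∧ θ ≠ 1 ∧ (fun w => θ w) '' X = Y}) =>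
        ∃ g : Equiv.Perm W, (∀ u v, B u v ↔ B (g u) (g v)) ∧ θ₂.val = g * θ₁.val * g⁻¹)) := by
  classical
  refine Nat.card_congr ?_
  let Φ : {A : ↥X → ↥X → Prop //
        ∃ e : (↥X × Bool) ≃ W, ∀ p q, MixedCDC A p q ↔ B (e p) (e q)} →
      {θ : Equiv.Perm W //
        (∀ u v, B u v ↔ B (θ u) (θ v)) ∧ θ * θ = 1 ∧ θ ≠ 1 ∧ (fun w => θ w) '' X = Y} :=
    fun a => ⟨Stmt3Aux.thetaOf (Classical.choose a.2),
      Stmt3Aux.mk_theta B X Y hpart_union hpart_disj harcs hconn a.1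
        (Classical.choose a.2) (Classical.choose_spec a.2)⟩
  let Ψ : {θ : Equiv.Perm W //
        (∀ u v, B u v ↔ B (θ u) (θ v)) ∧ θ * θ = 1 ∧ θ ≠ 1 ∧ (fun w => θ w) '' X = Y} →
      {A : ↥X → ↥X → Prop //
        ∃ e : (↥X × Bool) ≃ W, ∀ p q, MixedCDC A p q ↔ B (e p) (e q)} :=
    fun t => ⟨fun u v => B ↑u (t.1 ↑v),
      ⟨Classical.choose (Stmt3Aux.mk_A B X Y hpart_union hpart_disj harcs t.1 t.2),
       (Classical.choose_spec (Stmt3Aux.mk_A B X Y hpart_union hpart_disj harcs t.1 t.2)).1⟩⟩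
  have hΦ : ∀ a, ∃ e : (↥X × Bool) ≃ W,
      (∀ p q, MixedCDC a.1 p q ↔ B (e p) (e q)) ∧ (Φ a).1 = Stmt3Aux.thetaOf e :=
    fun a => ⟨Classical.choose a.2, Classical.choose_spec a.2, rfl⟩
  have hΨ : ∀ t, ∃ e : (↥X × Bool) ≃ W,
      (∀ p q, MixedCDC (Ψ t).1 p q ↔ B (e p) (e q)) ∧ Stmt3Aux.thetaOf e = t.1 :=
    fun t => ⟨Classical.choose (Stmt3Aux.mk_A B X Y hpart_union hpart_disj harcs t.1 t.2),
      (Classical.choose_spec (Stmt3Aux.mk_A B X Y hpart_union hpart_disj harcs t.1 t.2)).1,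
      (Classical.choose_spec (Stmt3Aux.mk_A B X Y hpart_union hpart_disj harcs t.1 t.2)).2⟩
  refine
    { toFun := Quot.lift (fun a => Quot.mk _ (Φ a)) ?_
      invFun := Quot.lift (fun t => Quot.mk _ (Ψ t)) ?_
      left_inv := ?_
      right_inv := ?_ }
  · rintro a b ⟨f, hf⟩
    obtain ⟨e₁, he₁, hθ₁⟩ := hΦ a
    obtain ⟨e₂, he₂, hθ₂⟩ := hΦ b
    obtain ⟨g, hg, hconj⟩ := Stmt3Aux.M1 B e₁ e₂ he₁ he₂ f hf
    exact Quot.sound ⟨g, hg, by rw [hθ₁, hθ₂, hconj]⟩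
  · rintro t₁ t₂ ⟨g, hg, hconj⟩
    obtain ⟨e₁, he₁, hθ₁⟩ := hΨ t₁
    obtain ⟨e₂, he₂, hθ₂⟩ := hΨ t₂
    have hconj' : Stmt3Aux.thetaOf e₂ = g * Stmt3Aux.thetaOf e₁ * g⁻¹ := by
      rw [hθ₂, hθ₁]; exact hconj
    obtain ⟨f, hf⟩ := Stmt3Aux.M2 B e₁ e₂ he₁ he₂ g hg hconj'
    exact Quot.sound ⟨f, hf⟩
  · intro q
    induction q using Quot.ind with
    | _ a =>
      obtain ⟨ee, hee, hθa⟩ := hΦ a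
      obtain ⟨e', he', hθ'⟩ := hΨ (Φ a)
      have hconj : Stmt3Aux.thetaOf ee = 1 * Stmt3Aux.thetaOf e' * 1⁻¹ := by
        rw [hθ', hθa]; group
      obtain ⟨f, hf⟩ := Stmt3Aux.M2 B e' ee he' hee 1 (fun u v => by simp) hconj
      exact Quot.sound ⟨f, hf⟩
  · intro q
    induction q using Quot.ind with
    | _ t =>
      obtain ⟨e, he, hθe⟩ := hΨ t
      obtain ⟨ee, hee, hθc⟩ := hΦ (Ψ t)
      obtain ⟨g, hg, hconj⟩ := Stmt3Aux.M1 B e ee he hee (Equiv.refl _) (fun u v => Iff.rfl)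
      have hg' : ∀ u v, B u v ↔ B (g⁻¹ u) (g⁻¹ v) := by
        intro u v
        have := hg (g⁻¹ u) (g⁻¹ v)
        simp only [Equiv.Perm.coe_inv, Equiv.apply_symm_apply] at this
        exact this.symm
      refine Quot.sound ⟨g⁻¹, hg', ?_⟩
      rw [hθc, hconj, hθe]
      group
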